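/- arXiv:1707.00230 — 3 statements merged into one kernel-verified Lean document; each statement's English description precedes it below -/
import Mathlib

section
/- For every fixed k ≥ 1 and all sufficiently large m: C(m^5, m) · C(m^5 − m^2, m^4 − m^2) · m^k < C(m^5, m^4). Equivalently, a polynomial number of queries, each ruling out at most C(m^5 − m^2, m^4 − m^2) of the C(m^5, m^4) possible placements of 1's, cannot rule out all placements. -/
open Finset

lemma aux_prod_sub_eq_factorial (r : ℕ) : (∏ i ∈ range r, (r - i)) = Nat.factorial r := by
  rw [← Finset.prod_range_add_one_eq_factorial, ← Finset.prod_range_reflect (fun i => i + 1) r]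
  apply Finset.prod_congr rfl
  intro i hi
  simp only [Finset.mem_range] at hi
  omega

/-- `n^r ≤ C(n,r) * r^r` for `r ≤ n`. -/
lemma aux_pow_le_choose_mul (n r : ℕ) (h : r ≤ n) :
    n ^ r ≤ Nat.choose n r * r ^ r := by
  have key : n ^ r * Nat.factorial r ≤ r ^ r * Nat.descFactorial n r := by
    rw [Nat.descFactorial_eq_prod_range, ← aux_prod_sub_eq_factorial r]
    have h1 : n ^ r = ∏ _i ∈ range r, n := by rw [Finset.prod_const, Finset.card_range]
    have h2 : r ^ r = ∏ _i ∈ range r, r := by rw [Finset.prod_const, Finset.card_range]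
    rw [h1, h2, ← Finset.prod_mul_distrib, ← Finset.prod_mul_distrib]
    apply Finset.prod_le_prod
    · intros; positivity
    · intro i hi
      simp only [Finset.mem_range] at hi
      have h2 : i ≤ n := le_trans (le_of_lt hi) h
      have h3 : r * i ≤ n * i := Nat.mul_le_mul_right i h
      calc n * (r - i) = n * r - n * i := Nat.mul_sub n r i
        _ ≤ r * n - r * i := by
            have h6 : r * i ≤ n * i := Nat.mul_le_mul_right i h
            have h7 : n * r = r * n := Nat.mul_comm n r
            omega
        _ = r * (n - i) := (Nat.mul_sub r n i).symm
  rw [Nat.descFactorial_eq_factorial_mul_choose] at key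
  have hfp : 0 < Nat.factorial r := Nat.factorial_pos r
  apply Nat.le_of_mul_le_mul_right _ hfp
  calc n ^ r * Nat.factorial r ≤ r ^ r * (Nat.factorial r * Nat.choose n r) := key
    _ = Nat.choose n r * r ^ r * Nat.factorial r := by ring

/-- `m^(m^2) * C(m^4, m^2) ≤ C(m^5, m^2)` for `m ≥ 1`. -/
lemma aux_ratio (m : ℕ) (hm : 1 ≤ m) :
    m ^ (m ^ 2) * Nat.choose (m ^ 4) (m ^ 2) ≤ Nat.choose (m ^ 5) (m ^ 2) := by
  have key : m ^ (m ^ 2) * Nat.descFactorial (m ^ 4) (m ^ 2)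
      ≤ Nat.descFactorial (m ^ 5) (m ^ 2) := by
    rw [Nat.descFactorial_eq_prod_range, Nat.descFactorial_eq_prod_range]
    have h1 : m ^ (m ^ 2) = ∏ _i ∈ range (m ^ 2), m := by
      rw [Finset.prod_const, Finset.card_range]
    rw [h1, ← Finset.prod_mul_distrib]
    apply Finset.prod_le_prod
    · intros; positivity
    · intro i hi
      simp only [Finset.mem_range] at hi
      have h3 : m * (m ^ 4) = m ^ 5 := by ring
      have h4 : i ≤ m * i := Nat.le_mul_of_pos_left i hm
      have h5 : i ≤ m ^ 4 := le_trans (le_of_lt hi) (Nat.pow_le_pow_right hm (by norm_num))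
      calc m * (m ^ 4 - i) = m * m ^ 4 - m * i := Nat.mul_sub m (m ^ 4) i
        _ ≤ m ^ 5 - i := by rw [h3]; omega
  rw [Nat.descFactorial_eq_factorial_mul_choose, Nat.descFactorial_eq_factorial_mul_choose] at key
  have hfp : 0 < Nat.factorial (m ^ 2) := Nat.factorial_pos _
  apply Nat.le_of_mul_le_mul_left _ hfp
  calc Nat.factorial (m ^ 2) * (m ^ (m ^ 2) * Nat.choose (m ^ 4) (m ^ 2))
      = m ^ (m ^ 2) * (Nat.factorial (m ^ 2) * Nat.choose (m ^ 4) (m ^ 2)) := by ring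
    _ ≤ Nat.factorial (m ^ 2) * Nat.choose (m ^ 5) (m ^ 2) := key

/-- For every fixed `k` and all sufficiently large `m`:
`C(m^5, m) · C(m^5 - m^2, m^4 - m^2) · m^k < C(m^5, m^4)`. -/
theorem stmt6 (k : ℕ) (hk : 1 ≤ k) :
    ∃ M : ℕ, ∀ m ≥ M,
      Nat.choose (m ^ 5) m * Nat.choose (m ^ 5 - m ^ 2) (m ^ 4 - m ^ 2) * m ^ k <
        Nat.choose (m ^ 5) (m ^ 4) := by
  refine ⟨k + 6, fun m hm => ?_⟩
  have hm2 : 2 ≤ m := by omega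
  have hm1 : 1 ≤ m := by omega
  have h24 : m ^ 2 ≤ m ^ 4 := Nat.pow_le_pow_right hm1 (by norm_num)
  have h45 : m ^ 4 ≤ m ^ 5 := Nat.pow_le_pow_right hm1 (by norm_num)
  have h25 : m ^ 2 ≤ m ^ 5 := le_trans h24 h45
  have key : Nat.choose (m ^ 5) m * m ^ k * Nat.choose (m ^ 4) (m ^ 2)
      < Nat.choose (m ^ 5) (m ^ 2) := by
    have hpos : 0 < Nat.choose (m ^ 4) (m ^ 2) := Nat.choose_pos h24
    have hub : Nat.choose (m ^ 5) m * m ^ k ≤ m ^ (5 * m + k) := by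
      calc Nat.choose (m ^ 5) m * m ^ k ≤ (m ^ 5) ^ m * m ^ k :=
            Nat.mul_le_mul_right _ (Nat.choose_le_pow _ _)
        _ = m ^ (5 * m + k) := by rw [← pow_mul, ← pow_add]
    have hexp : 5 * m + k < m ^ 2 := by nlinarith
    have hlt : m ^ (5 * m + k) < m ^ (m ^ 2) := Nat.pow_lt_pow_right hm2 hexp
    calc Nat.choose (m ^ 5) m * m ^ k * Nat.choose (m ^ 4) (m ^ 2)
        ≤ m ^ (5 * m + k) * Nat.choose (m ^ 4) (m ^ 2) :=
          Nat.mul_le_mul_right _ hub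
      _ < m ^ (m ^ 2) * Nat.choose (m ^ 4) (m ^ 2) :=
          (Nat.mul_lt_mul_right hpos).mpr hlt
      _ ≤ Nat.choose (m ^ 5) (m ^ 2) := aux_ratio m hm1
  have hid : Nat.choose (m ^ 5) (m ^ 4) * Nat.choose (m ^ 4) (m ^ 2)
      = Nat.choose (m ^ 5) (m ^ 2) * Nat.choose (m ^ 5 - m ^ 2) (m ^ 4 - m ^ 2) :=
    Nat.choose_mul h24
  have hpos4 : 0 < Nat.choose (m ^ 4) (m ^ 2) := Nat.choose_pos h24
  have hDpos : 0 < Nat.choose (m ^ 5 - m ^ 2) (m ^ 4 - m ^ 2) :=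
    Nat.choose_pos (by omega)
  apply Nat.lt_of_mul_lt_mul_right (a := Nat.choose (m ^ 4) (m ^ 2))
  calc Nat.choose (m ^ 5) m * Nat.choose (m ^ 5 - m ^ 2) (m ^ 4 - m ^ 2) * m ^ k
        * Nat.choose (m ^ 4) (m ^ 2)
      = (Nat.choose (m ^ 5) m * m ^ k * Nat.choose (m ^ 4) (m ^ 2))
        * Nat.choose (m ^ 5 - m ^ 2) (m ^ 4 - m ^ 2) := by ring
    _ < Nat.choose (m ^ 5) (m ^ 2) * Nat.choose (m ^ 5 - m ^ 2) (m ^ 4 - m ^ 2) :=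
        (Nat.mul_lt_mul_right hDpos).mpr key
    _ = Nat.choose (m ^ 5) (m ^ 4) * Nat.choose (m ^ 4) (m ^ 2) := hid.symm
end

section
/- Worst-case approximation ratio of the two-block algorithm in Theorem 4: let n = 2m, l < h with l, h > 0, and let F be the downward closure of {(0^m,1^m), (1^m,0^m)} ⊆ {0,1}^{2m}. Define A : {l,h}^{2m} → F by A(v) = (0^m,1^m) if v has at most m + f h's (for a fixed threshold 0 ≤ f < m/2), and A(v) = (1^m,0^m) otherwise. Then approx_F(A) = min_v (v·A(v))/OPT_F(v) = l/h, achieved at v = (h^m, l^m). -/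
open Finset

noncomputable def dot {n : ℕ} (v x : Fin n → ℝ) : ℝ := ∑ i, v i * x i

lemma sumIf (m : ℕ) (a b : ℝ) :
    ∑ i : Fin (2*m), (if (i:ℕ) < m then a else b) = m*a + m*b := by
  rw [Fin.sum_univ_eq_sum_range (fun i => if i < m then a else b),
    Finset.sum_ite, Finset.sum_const, Finset.sum_const]
  have h1 : (Finset.range (2*m)).filter (· < m) = Finset.range m := by
    ext x; simp; omega
  have h2 : (Finset.range (2*m)).filter (fun x => ¬ x < m) = Finset.Ico m (2*m) := by
    ext x; simp; omega
  rw [h1, h2, Finset.card_range, Nat.card_Ico]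
  have h3 : 2*m - m = m := by omega
  rw [h3]; simp

/-- The two-block algorithm of Theorem 4 has worst-case approximation ratio
exactly `l/h`: every input achieves ratio at least `l/h`, and some input in
`{l,h}^{2m}` achieves it with equality. -/
theorem stmt11 (m f : ℕ) (hm : 0 < m) (hf : 2 * f < m)
    (l h : ℝ) (hl : 0 < l) (hlh : l < h)
    (D1 D2 : Fin (2 * m) → ℝ)
    (hD1 : ∀ i : Fin (2 * m), D1 i = if (i : ℕ) < m then 0 else 1)
    (hD2 : ∀ i : Fin (2 * m), D2 i = if (i : ℕ) < m then 1 else 0)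
    (A : (Fin (2 * m) → ℝ) → (Fin (2 * m) → ℝ))
    (hA : ∀ v : Fin (2 * m) → ℝ,
      A v = if (Finset.univ.filter (fun i => v i = h)).card ≤ m + f then D1 else D2)
    (OPT : (Fin (2 * m) → ℝ) → ℝ)
    (hOPT : ∀ v, OPT v = max (dot v D2) (dot v D1)) :
    (∀ v : Fin (2 * m) → ℝ, (∀ i, v i = l ∨ v i = h) →
      (l / h) * OPT v ≤ dot v (A v)) ∧
    (∃ v : Fin (2 * m) → ℝ, (∀ i, v i = l ∨ v i = h) ∧
      dot v (A v) = (l / h) * OPT v) := by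
  have hh : (0:ℝ) < h := lt_trans hl hlh
  have hkey : (l/h) * (m*h) = m*l := by field_simp
  -- generic bounds
  have bounds : ∀ v : Fin (2 * m) → ℝ, (∀ i, v i = l ∨ v i = h) →
      (m*l ≤ dot v D1 ∧ dot v D1 ≤ m*h ∧ m*l ≤ dot v D2 ∧ dot v D2 ≤ m*h) := by
    intro v hv
    have hvl : ∀ i, l ≤ v i := by
      intro i; rcases hv i with h1 | h1 <;> rw [h1]
      exact le_of_lt hlh
    have hvh : ∀ i, v i ≤ h := by
      intro i; rcases hv i with h1 | h1 <;> rw [h1]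
      exact le_of_lt hlh
    refine ⟨?_, ?_, ?_, ?_⟩
    · have := sumIf m 0 l
      have h0 : m*l = ∑ i : Fin (2*m), (if (i:ℕ) < m then (0:ℝ) else l) := by
        rw [this]; ring
      rw [h0, dot]
      apply Finset.sum_le_sum
      intro i _
      rw [hD1 i]
      by_cases hi : (i:ℕ) < m
      · simp [hi]
      · simp only [hi, if_false, mul_one]; exact hvl i
    · have h0 : m*h = ∑ i : Fin (2*m), (if (i:ℕ) < m then (0:ℝ) else h) := by
        rw [sumIf m 0 h]; ring
      rw [h0, dot]
      apply Finset.sum_le_sum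
      intro i _
      rw [hD1 i]
      by_cases hi : (i:ℕ) < m
      · simp [hi]
      · simp only [hi, if_false, mul_one]; exact hvh i
    · have h0 : m*l = ∑ i : Fin (2*m), (if (i:ℕ) < m then l else (0:ℝ)) := by
        rw [sumIf m l 0]; ring
      rw [h0, dot]
      apply Finset.sum_le_sum
      intro i _
      rw [hD2 i]
      by_cases hi : (i:ℕ) < m
      · simp only [hi, if_true, mul_one]; exact hvl i
      · simp [hi]
    · have h0 : m*h = ∑ i : Fin (2*m), (if (i:ℕ) < m then h else (0:ℝ)) := by
        rw [sumIf m h 0]; ring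
      rw [h0, dot]
      apply Finset.sum_le_sum
      intro i _
      rw [hD2 i]
      by_cases hi : (i:ℕ) < m
      · simp only [hi, if_true, mul_one]; exact hvh i
      · simp [hi]
  constructor
  · intro v hv
    obtain ⟨b1, b2, b3, b4⟩ := bounds v hv
    have hOPTle : OPT v ≤ m*h := by rw [hOPT]; exact max_le b4 b2
    have step : (l/h) * OPT v ≤ m*l := by
      calc (l/h) * OPT v ≤ (l/h) * (m*h) :=
            mul_le_mul_of_nonneg_left hOPTle (le_of_lt (div_pos hl hh))
        _ = m*l := hkey
    rw [hA v]
    by_cases hc : (Finset.univ.filter (fun i => v i = h)).card ≤ m + f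
    · simp only [hc, if_true]; exact le_trans step b1
    · simp only [hc, if_false]; exact le_trans step b3
  · refine ⟨fun i => if (i:ℕ) < m then h else l, ?_, ?_⟩
    · intro i; by_cases hi : (i:ℕ) < m
      · right; simp [hi]
      · left; simp [hi]
    · set v : Fin (2*m) → ℝ := fun i => if (i:ℕ) < m then h else l with hvdef
      have hfilter : (Finset.univ.filter (fun i => v i = h)) =
          (Finset.univ.filter (fun i : Fin (2*m) => (i:ℕ) < m)) := by
        apply Finset.filter_congr
        intro i _
        simp only [hvdef]
        by_cases hi : (i:ℕ) < m
        · simp [hi]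
        · simp only [hi, if_false, iff_false]
          exact ne_of_lt hlh
      have hcard : (Finset.univ.filter (fun i : Fin (2*m) => (i:ℕ) < m)).card = m := by
        have : ((Finset.univ.filter (fun i : Fin (2*m) => (i:ℕ) < m)).card : ℝ) = m := by
          rw [Finset.card_filter]
          push_cast
          rw [sumIf m (1:ℝ) 0]
          ring
        exact_mod_cast this
      have hAv : A v = D1 := by
        rw [hA v, hfilter, hcard]
        simp
      have hd1 : dot v D1 = m*l := by
        rw [dot]
        have : ∀ i : Fin (2*m), v i * D1 i = if (i:ℕ) < m then (0:ℝ) else l := by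
          intro i; rw [hD1 i]
          by_cases hi : (i:ℕ) < m <;> simp [hvdef, hi]
        rw [Finset.sum_congr rfl (fun i _ => this i), sumIf m 0 l]
        ring
      have hd2 : dot v D2 = m*h := by
        rw [dot]
        have : ∀ i : Fin (2*m), v i * D2 i = if (i:ℕ) < m then h else (0:ℝ) := by
          intro i; rw [hD2 i]
          by_cases hi : (i:ℕ) < m <;> simp [hvdef, hi]
        rw [Finset.sum_congr rfl (fun i _ => this i), sumIf m h 0]
        ring
      have hOPTv : OPT v = m*h := by
        rw [hOPT, hd1, hd2]
        apply max_eq_left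
        have : (0:ℝ) ≤ (m:ℝ) := Nat.cast_nonneg m
        exact mul_le_mul_of_nonneg_left (le_of_lt hlh) this
      rw [hAv, hd1, hOPTv, hkey]
end

section
/- Asymptotic inequality for feasibility queries in Theorem 3: for reals c > d > e > 1 and every fixed k ≥ 1, for all sufficiently large m: C(m^c, m) · C(m^c − m^e, m^d − m^e) · m^k < C(m^c, m^d), where exponents denote integer parts m^c := ⌊m^c⌋ etc. -/
open Filter Real

lemma choose_shift (E : ℕ) : ∀ N D : ℕ, 2 * D ≤ N → E ≤ D →
    Nat.choose (N - E) (D - E) * 2 ^ E ≤ Nat.choose N D := by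
  induction E with
  | zero => simp
  | succ E ih =>
    intro N D h2 hE
    obtain ⟨D', rfl⟩ : ∃ D', D = D' + 1 := ⟨D - 1, by omega⟩
    obtain ⟨N', rfl⟩ : ∃ N', N = N' + 1 := ⟨N - 1, by omega⟩
    have key : Nat.choose (N' + 1) (D' + 1) * (D' + 1) = (N' + 1) * Nat.choose N' D' :=
      (Nat.add_one_mul_choose_eq N' D').symm
    have h2' : 2 * Nat.choose N' D' ≤ Nat.choose (N' + 1) (D' + 1) := by
      refine Nat.le_of_mul_le_mul_right ?_ (Nat.succ_pos D')
      calc 2 * Nat.choose N' D' * (D' + 1) = 2 * (D' + 1) * Nat.choose N' D' := by ring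
        _ ≤ (N' + 1) * Nat.choose N' D' := Nat.mul_le_mul_right _ (by omega)
        _ = Nat.choose (N' + 1) (D' + 1) * (D' + 1) := key.symm
    have ihx := ih N' D' (by omega) (by omega)
    calc Nat.choose (N' + 1 - (E + 1)) (D' + 1 - (E + 1)) * 2 ^ (E + 1)
        = Nat.choose (N' - E) (D' - E) * 2 ^ E * 2 := by
          rw [Nat.succ_sub_succ, Nat.succ_sub_succ, pow_succ]; ring
      _ ≤ Nat.choose N' D' * 2 := Nat.mul_le_mul_right _ ihx
      _ = 2 * Nat.choose N' D' := by ring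
      _ ≤ _ := h2'

lemma event_real (c e : ℝ) (hc : 0 < c) (he : e > 1) (k : ℕ) :
    ∀ᶠ x : ℝ in atTop,
      (c * x + k) * Real.log x < (x ^ e - 1) * Real.log 2 := by
  have hlo := (isLittleO_log_rpow_atTop (by linarith : (0:ℝ) < e - 1))
  have hck : (0:ℝ) < c + k + 1 := by positivity
  have hε : (0:ℝ) < (Real.log 2 / 4) / (c + k + 1) := by
    have := Real.log_pos (by norm_num : (1:ℝ) < 2)
    positivity
  filter_upwards [hlo.def hε, eventually_ge_atTop (2:ℝ),
      (tendsto_rpow_atTop (by linarith : (0:ℝ) < e)).eventually_ge_atTop 2] with x hx hx2 hxe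
  have hx0 : (0:ℝ) < x := by linarith
  have hx1 : (1:ℝ) ≤ x := by linarith
  have hlog : 0 ≤ Real.log x := Real.log_nonneg hx1
  have hlog2 : 0 < Real.log 2 := Real.log_pos (by norm_num)
  have hrp : (0:ℝ) < x ^ (e - 1) := Real.rpow_pos_of_pos hx0 _
  rw [Real.norm_eq_abs, Real.norm_eq_abs, abs_of_nonneg hlog,
    abs_of_nonneg hrp.le] at hx
  have h1 : (c * x + k) * Real.log x ≤ (c + k + 1) * x * Real.log x := by
    have : c * x + (k:ℝ) ≤ (c + k + 1) * x := by nlinarith [Nat.cast_nonneg (α := ℝ) k]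
    exact mul_le_mul_of_nonneg_right this hlog
  have h2 : (c + k + 1) * x * Real.log x
      ≤ (c + k + 1) * x * ((Real.log 2 / 4) / (c + k + 1) * x ^ (e - 1)) := by
    have := mul_le_mul_of_nonneg_left hx (by positivity : (0:ℝ) ≤ (c + k + 1) * x)
    linarith
  have hxx : x * x ^ (e - 1) = x ^ e := by
    have h := (Real.rpow_add hx0 1 (e - 1)).symm
    rw [Real.rpow_one] at h
    rw [h]
    congr 1
    ring
  have h3 : (c + k + 1) * x * ((Real.log 2 / 4) / (c + k + 1) * x ^ (e - 1))
      = Real.log 2 / 4 * x ^ e := by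
    rw [← hxx]
    field_simp
  have h4 : Real.log 2 / 4 * x ^ e < (x ^ e - 1) * Real.log 2 := by nlinarith
  linarith

/-- Feasibility-query counting inequality for `h/l ∈ O(n^α)`: for reals
`c > d > e > 1` and any fixed `k`, for all sufficiently large `m`,
`C(⌊m^c⌋, m) · C(⌊m^c⌋ - ⌊m^e⌋, ⌊m^d⌋ - ⌊m^e⌋) · m^k < C(⌊m^c⌋, ⌊m^d⌋)`. -/
theorem stmt14 (c d e : ℝ) (hcd : c > d) (hde : d > e) (he : e > 1)
    (k : ℕ) (hk : 1 ≤ k) :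
    ∃ M : ℕ, ∀ m ≥ M,
      Nat.choose ⌊(m : ℝ) ^ c⌋₊ m *
          Nat.choose (⌊(m : ℝ) ^ c⌋₊ - ⌊(m : ℝ) ^ e⌋₊)
            (⌊(m : ℝ) ^ d⌋₊ - ⌊(m : ℝ) ^ e⌋₊) * m ^ k <
        Nat.choose ⌊(m : ℝ) ^ c⌋₊ ⌊(m : ℝ) ^ d⌋₊ := by
  have hc0 : (0:ℝ) < c := by linarith
  have hnat : Tendsto (fun m : ℕ => (m : ℝ)) atTop atTop := tendsto_natCast_atTop_atTop
  have hEv : ∀ᶠ m : ℕ in atTop,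
      (c * (m:ℝ) + k) * Real.log m < ((m:ℝ) ^ e - 1) * Real.log 2 :=
    hnat.eventually (event_real c e hc0 he k)
  have h3cd : ∀ᶠ m : ℕ in atTop, (3:ℝ) ≤ (m:ℝ) ^ (c - d) :=
    hnat.eventually ((tendsto_rpow_atTop (by linarith : (0:ℝ) < c - d)).eventually_ge_atTop 3)
  have H : ∀ᶠ m : ℕ in atTop,
      Nat.choose ⌊(m : ℝ) ^ c⌋₊ m *
          Nat.choose (⌊(m : ℝ) ^ c⌋₊ - ⌊(m : ℝ) ^ e⌋₊)
            (⌊(m : ℝ) ^ d⌋₊ - ⌊(m : ℝ) ^ e⌋₊) * m ^ k <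
        Nat.choose ⌊(m : ℝ) ^ c⌋₊ ⌊(m : ℝ) ^ d⌋₊ := by
    filter_upwards [hEv, h3cd, eventually_ge_atTop 2] with m hlog h3 hm2
    set N := ⌊(m : ℝ) ^ c⌋₊ with hN
    set D := ⌊(m : ℝ) ^ d⌋₊ with hD
    set E := ⌊(m : ℝ) ^ e⌋₊ with hE
    have hx2 : (2:ℝ) ≤ (m:ℝ) := by exact_mod_cast hm2
    have hx0 : (0:ℝ) < (m:ℝ) := by linarith
    have hx1 : (1:ℝ) ≤ (m:ℝ) := by linarith
    have hED : E ≤ D := Nat.floor_mono (Real.rpow_le_rpow_of_exponent_le hx1 hde.le)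
    have hDN : D ≤ N := Nat.floor_mono (Real.rpow_le_rpow_of_exponent_le hx1 hcd.le)
    have hd1 : (1:ℝ) ≤ (m:ℝ) ^ d := by
      have h := Real.rpow_le_rpow_of_exponent_le hx1 (by linarith : (0:ℝ) ≤ d)
      rwa [Real.rpow_zero] at h
    have hDle : (D:ℝ) ≤ (m:ℝ) ^ d := Nat.floor_le (by positivity)
    have hNgt : (m:ℝ) ^ c - 1 < (N:ℝ) := Nat.sub_one_lt_floor _
    have hNle : (N:ℝ) ≤ (m:ℝ) ^ c := Nat.floor_le (by positivity)
    have hsplit : (m:ℝ) ^ c = (m:ℝ) ^ d * (m:ℝ) ^ (c - d) := by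
      rw [← Real.rpow_add hx0]
      congr 1
      ring
    have h2D : 2 * D ≤ N := by
      have hcast : ((2 * D : ℕ) : ℝ) < (N:ℝ) := by
        push_cast
        nlinarith
      exact (Nat.cast_lt.mp hcast).le
    -- the key counting bound : N^m * m^k < 2^E
    have hbig : N ^ m * m ^ k < 2 ^ E := by
      have hreal : ((N ^ m * m ^ k : ℕ) : ℝ) < ((2 ^ E : ℕ) : ℝ) := by
        push_cast
        have s1 : (N:ℝ) ^ m ≤ ((m:ℝ) ^ c) ^ m :=
          pow_le_pow_left₀ (Nat.cast_nonneg N) hNle m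
        have s2 : ((m:ℝ) ^ c) ^ m = (m:ℝ) ^ (c * m) := by
          rw [Real.rpow_mul hx0.le, Real.rpow_natCast]
        have s3 : ((m:ℝ)) ^ k = (m:ℝ) ^ (k:ℝ) := (Real.rpow_natCast _ k).symm
        have s4 : (m:ℝ) ^ (c * m) * (m:ℝ) ^ (k:ℝ) = (m:ℝ) ^ (c * m + k) :=
          (Real.rpow_add hx0 _ _).symm
        have s5 : (m:ℝ) ^ (c * m + k) < (2:ℝ) ^ ((m:ℝ) ^ e - 1) := by
          rw [Real.rpow_def_of_pos hx0, Real.rpow_def_of_pos (by norm_num : (0:ℝ) < 2)]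
          apply Real.exp_lt_exp.mpr
          calc Real.log (m:ℝ) * (c * m + k) = (c * m + k) * Real.log m := mul_comm _ _
            _ < ((m:ℝ) ^ e - 1) * Real.log 2 := hlog
            _ = Real.log 2 * ((m:ℝ) ^ e - 1) := mul_comm _ _
        have s6 : (2:ℝ) ^ ((m:ℝ) ^ e - 1) ≤ (2:ℝ) ^ ((E:ℕ):ℝ) :=
          Real.rpow_le_rpow_of_exponent_le one_le_two (Nat.sub_one_lt_floor _).le
        have s7 : (2:ℝ) ^ ((E:ℕ):ℝ) = (2:ℝ) ^ (E:ℕ) := Real.rpow_natCast _ _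
        calc (N:ℝ) ^ m * (m:ℝ) ^ k ≤ ((m:ℝ) ^ c) ^ m * (m:ℝ) ^ k := by
              apply mul_le_mul_of_nonneg_right s1 (by positivity)
          _ = (m:ℝ) ^ (c * m + k) := by rw [s2, s3, s4]
          _ < (2:ℝ) ^ ((m:ℝ) ^ e - 1) := s5
          _ ≤ (2:ℝ) ^ (E:ℕ) := by rw [← s7]; exact s6
      exact_mod_cast hreal
    have hpos : 0 < Nat.choose (N - E) (D - E) := Nat.choose_pos (by omega)
    calc Nat.choose N m * Nat.choose (N - E) (D - E) * m ^ k
        ≤ N ^ m * Nat.choose (N - E) (D - E) * m ^ k := by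
          gcongr
          exact Nat.choose_le_pow N m
      _ = Nat.choose (N - E) (D - E) * (N ^ m * m ^ k) := by ring
      _ < Nat.choose (N - E) (D - E) * 2 ^ E := by
          exact mul_lt_mul_of_pos_left hbig hpos
      _ ≤ Nat.choose N D := choose_shift E N D h2D hED
  exact eventually_atTop.mp H
end
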